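/- Let r > 0, let c ∈ ℝ², and let X be a finite set of points in ℝ² such that dist(c,x) < 2r for every x ∈ X and dist(x,x') ≥ 2r for all distinct x, x' ∈ X. Then |X| ≤ 5. -/

import Mathlib

open Complex Real

/-- The real part of `z * conj w` equals `|z| * |w| * cos (arg z - arg w)`. -/
lemma re_mul_conj_eq {z w : ℂ} (hz : z ≠ 0) (hw : w ≠ 0) :
    (z * (starRingEnd ℂ) w).re = ‖z‖ * ‖w‖ * Real.cos (z.arg - w.arg) := by
  rw [Real.cos_sub, Complex.cos_arg hz, Complex.sin_arg, Complex.cos_arg hw, Complex.sin_arg,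
    Complex.mul_re, Complex.conj_re, Complex.conj_im]
  field_simp [norm_ne_zero_iff.mpr hz, norm_ne_zero_iff.mpr hw]
  ring

/-- Key analytic lemma: if `|z| < 2r`, `|w| < 2r` but `|z - w| ≥ 2r`, then the
angle between `z` and `w` exceeds `π/3`, i.e. its cosine is `< 1/2`. -/
lemma cos_arg_sub_lt_half {r : ℝ} (hr : 0 < r) {z w : ℂ}
    (hz : ‖z‖ < 2 * r) (hw : ‖w‖ < 2 * r)
    (hd : 2 * r ≤ ‖z - w‖) :
    Real.cos (z.arg - w.arg) < 1 / 2 := by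
  have hz0 : z ≠ 0 := by
    rintro rfl
    simp only [zero_sub, norm_neg] at hd
    linarith
  have hw0 : w ≠ 0 := by
    rintro rfl
    simp only [sub_zero] at hd
    linarith
  set a := ‖z‖ with ha
  set b := ‖w‖ with hb
  have ha0 : 0 < a := norm_pos_iff.mpr hz0
  have hb0 : 0 < b := norm_pos_iff.mpr hw0
  have key : (‖z - w‖) ^ 2 = a ^ 2 + b ^ 2 - 2 * (z * (starRingEnd ℂ) w).re := by
    rw [Complex.sq_norm, ha, hb, Complex.sq_norm, Complex.sq_norm]
    simp only [Complex.normSq_apply, Complex.sub_re, Complex.sub_im, Complex.mul_re,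
      Complex.conj_re, Complex.conj_im]
    ring
  have hsq : (2 * r) ^ 2 ≤ (‖z - w‖) ^ 2 := by
    apply pow_le_pow_left₀ (by linarith) hd
  rw [re_mul_conj_eq hz0 hw0, ← ha, ← hb] at key
  have hab0 : 0 < a * b := mul_pos ha0 hb0
  have h1 : 2 * (a * b) * Real.cos (z.arg - w.arg) ≤ a ^ 2 + b ^ 2 - (2 * r) ^ 2 := by
    nlinarith [hsq, key]
  have h2 : a ^ 2 + b ^ 2 - (2 * r) ^ 2 < a * b := by
    rcases le_total a b with hab | hab <;> nlinarith
  have h3 : a * b * Real.cos (z.arg - w.arg) < a * b * (1 / 2) := by linarith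
  exact (mul_lt_mul_iff_right₀ hab0).mp h3

/-- Cosine only depends on the angle mod `2π`: rotating both arguments by `arg z₀`. -/
lemma cos_arg_div_sub {z w z₀ : ℂ} (hz : z ≠ 0) (hw : w ≠ 0) (hz₀ : z₀ ≠ 0) :
    Real.cos ((z / z₀).arg - (w / z₀).arg) = Real.cos (z.arg - w.arg) := by
  have h : (((z / z₀).arg - (w / z₀).arg : ℝ) : Real.Angle) = ((z.arg - w.arg : ℝ) : Real.Angle) := by
    rw [Real.Angle.coe_sub, Real.Angle.coe_sub, Complex.arg_div_coe_angle hz hz₀,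
      Complex.arg_div_coe_angle hw hz₀]
    abel
  have := congrArg Real.Angle.cos h
  rwa [Real.Angle.cos_coe, Real.Angle.cos_coe] at this

/-- If `t ∈ (-π, π]` and `cos t < 1/2` then `π/3 < |t|`. -/
lemma pi_div_three_lt_abs_of_cos_lt_half {t : ℝ} (h1 : -π < t) (h2 : t ≤ π)
    (hc : Real.cos t < 1 / 2) : π / 3 < |t| := by
  by_contra h
  push_neg at h
  have : Real.cos (π / 3) ≤ Real.cos |t| :=
    Real.cos_le_cos_of_nonneg_of_le_pi (abs_nonneg t) (by linarith [Real.pi_pos]) h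
  rw [Real.cos_abs, Real.cos_pi_div_three] at this
  linarith

/-- If `|t| < π/3` then `cos t > 1/2`. -/
lemma half_lt_cos_of_abs_lt {t : ℝ} (h : |t| < π / 3) : 1 / 2 < Real.cos t := by
  have : Real.cos (π / 3) < Real.cos |t| :=
    Real.cos_lt_cos_of_nonneg_of_le_pi (abs_nonneg t) (by linarith [Real.pi_pos]) h
  rwa [Real.cos_abs, Real.cos_pi_div_three] at this

/-- If every point of a finite set `X` in the Euclidean plane is at distance `< 2r` from
`c`, and the points of `X` are pairwise at distance `≥ 2r` (with `r > 0`), then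
`|X| ≤ 5`. -/
theorem card_le_five_of_close_and_separated (r : ℝ) (hr : 0 < r)
    (c : EuclideanSpace ℝ (Fin 2)) (X : Finset (EuclideanSpace ℝ (Fin 2)))
    (hclose : ∀ x ∈ X, dist c x < 2 * r)
    (hsep : ∀ x ∈ X, ∀ y ∈ X, x ≠ y → 2 * r ≤ dist x y) :
    X.card ≤ 5 := by
  classical
  by_contra hcard
  push_neg at hcard
  -- map punctured points into ℂ relative to c
  set z : EuclideanSpace ℝ (Fin 2) → ℂ := fun x => ⟨x 0 - c 0, x 1 - c 1⟩ with hzdef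
  have hdist : ∀ x y : EuclideanSpace ℝ (Fin 2), dist x y = ‖z x - z y‖ := by
    intro x y
    rw [EuclideanSpace.dist_eq, Complex.norm_def]
    congr 1
    simp only [hzdef, Complex.normSq_apply, Complex.sub_re, Complex.sub_im, Fin.sum_univ_two,
      Real.dist_eq]
    rw [_root_.sq_abs, _root_.sq_abs]
    ring
  have hdistc : ∀ x : EuclideanSpace ℝ (Fin 2), dist c x = ‖z x‖ := by
    intro x
    rw [dist_comm, hdist x c]
    congr 1
    simp only [hzdef]
    apply Complex.ext <;> simp
  -- all points give nonzero vectors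
  have hz0 : ∀ x ∈ X, z x ≠ 0 := by
    intro x hx h0
    obtain ⟨y, hy, hyx⟩ := Finset.exists_mem_ne (s := X) (by omega) x
    have h1 := hsep y hy x hx hyx
    have h2 := hclose y hy
    rw [hdist y x, h0, sub_zero] at h1
    rw [hdistc y] at h2
    linarith
  -- cosine of pairwise angles < 1/2
  have hcos : ∀ x ∈ X, ∀ y ∈ X, x ≠ y → Real.cos ((z x).arg - (z y).arg) < 1 / 2 := by
    intro x hx y hy hxy
    apply cos_arg_sub_lt_half hr
    · rw [← hdistc]; exact hclose x hx
    · rw [← hdistc]; exact hclose y hy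
    · rw [← hdist]; exact hsep x hx y hy hxy
  -- pick a base point
  have hne : X.Nonempty := Finset.card_pos.mp (by omega)
  obtain ⟨x₀, hx₀⟩ := hne
  set Y := X.erase x₀ with hY
  have hYcard : 5 ≤ Y.card := by
    rw [hY, Finset.card_erase_of_mem hx₀]
    omega
  set φ : EuclideanSpace ℝ (Fin 2) → ℝ := fun x => (z x / z x₀).arg with hφdef
  have hφrange : ∀ x, -π < φ x ∧ φ x ≤ π := fun x => ⟨Complex.neg_pi_lt_arg _, Complex.arg_le_pi _⟩
  have hφcos : ∀ x ∈ X, ∀ y ∈ X, x ≠ y → Real.cos (φ x - φ y) < 1 / 2 := by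
    intro x hx y hy hxy
    rw [hφdef]
    rw [cos_arg_div_sub (hz0 x hx) (hz0 y hy) (hz0 x₀ hx₀)]
    exact hcos x hx y hy hxy
  -- points of Y have |φ| > π/3
  have hφx₀ : φ x₀ = 0 := by
    rw [hφdef]
    simp only
    rw [div_self (hz0 x₀ hx₀)]
    exact Complex.arg_one
  have hbig : ∀ y ∈ Y, π / 3 < |φ y| := by
    intro y hy
    have hyX : y ∈ X := Finset.mem_of_mem_erase hy
    have hyne : y ≠ x₀ := Finset.ne_of_mem_erase hy
    have := hφcos y hyX x₀ hx₀ hyne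
    rw [hφx₀, sub_zero] at this
    exact pi_div_three_lt_abs_of_cos_lt_half (hφrange y).1 (hφrange y).2 this
  -- bucket map into Fin 4
  set f : ℝ → Fin 4 := fun t =>
    if t ≤ -(2 * π / 3) then 0 else if t < 0 then 1 else if t ≤ 2 * π / 3 then 2 else 3 with hf
  obtain ⟨y₁, hy₁, y₂, hy₂, hne12, heq⟩ :=
    Finset.exists_ne_map_eq_of_card_lt_of_maps_to
      (s := Y) (t := (Finset.univ : Finset (Fin 4)))
      (by rw [Finset.card_univ, Fintype.card_fin]; omega) (fun a _ => Finset.mem_univ (f (φ a)))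
  -- in the same bucket: |φ y₁ - φ y₂| < π/3
  have hπ := Real.pi_pos
  have hclose12 : |φ y₁ - φ y₂| < π / 3 := by
    have h1 := hφrange y₁; have h2 := hφrange y₂
    have b1 := hbig y₁ hy₁; have b2 := hbig y₂ hy₂
    rw [abs_sub_lt_iff]
    simp only [hf] at heq
    rcases abs_cases (φ y₁) with ⟨e1, _⟩ | ⟨e1, _⟩ <;>
      rcases abs_cases (φ y₂) with ⟨e2, _⟩ | ⟨e2, _⟩ <;>
      split_ifs at heq <;>
      first
        | exact absurd heq (by decide)
        | (constructor <;> linarith)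
  have := hφcos y₁ (Finset.mem_of_mem_erase hy₁) y₂ (Finset.mem_of_mem_erase hy₂) hne12
  have := half_lt_cos_of_abs_lt hclose12
  linarith
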